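/- arXiv:0903.4866 — 4 statements merged into one kernel-verified Lean document; each statement's English description precedes it below -/
import Mathlib

section
/- Let t ≥ 2, Q, M > 0 be integers, i ≥ 1, and set r = sqrt(⌈Q/M⌉ · ln(M·t·2^i)/2). Then the number of strings in T^Q that are (M,r)-unbalanced is strictly less than t^Q · 2^{-i}. -/
open Real Finset

lemma hoeffding_mgf (p : ℝ) (hp0 : 0 < p) (hp1 : p < 1) {s : ℝ} (hs : 0 ≤ s) :
    1 - p + p * Real.exp s ≤ Real.exp (p * s + s ^ 2 / 8) := by
  set c : ℝ := 1 - p with hc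
  have hcpos : 0 < c := by simp [hc]; linarith
  have pos : ∀ x : ℝ, 0 < c + p * Real.exp x := fun x => by positivity
  -- the derivative function
  set h : ℝ → ℝ := fun x => p + x / 4 - p * Real.exp x / (c + p * Real.exp x) with hh
  have hder : ∀ x, HasDerivAt h
      (1 / 4 - p * Real.exp x * c / (c + p * Real.exp x) ^ 2) x := by
    intro x
    have he : HasDerivAt (fun y => p * Real.exp y) (p * Real.exp x) x :=
      (Real.hasDerivAt_exp x).const_mul p
    have hden : HasDerivAt (fun y => c + p * Real.exp y) (p * Real.exp x) x := he.const_add c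
    have hquot := he.div hden (pos x).ne'
    have hlin : HasDerivAt (fun y : ℝ => p + y / 4) (1 / 4) x := by
      simpa using ((hasDerivAt_id x).div_const 4).const_add p
    have : HasDerivAt h (1 / 4 - (p * Real.exp x * (c + p * Real.exp x) - p * Real.exp x * (p * Real.exp x)) / (c + p * Real.exp x) ^ 2) x := hlin.sub hquot
    convert this using 1
    field_simp
    ring
  have hdiff : Differentiable ℝ h := fun x => (hder x).differentiableAt
  have hmono : Monotone h := by
    apply monotone_of_deriv_nonneg hdiff
    intro x
    rw [(hder x).deriv]
    have h1 := pos x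
    have h2 : (0:ℝ) < Real.exp x := Real.exp_pos x
    rw [sub_nonneg, div_le_iff₀ (by positivity)]
    nlinarith [sq_nonneg (c - p * Real.exp x)]
  have h0 : h 0 = 0 := by
    simp only [hh, Real.exp_zero, mul_one]
    have : c + p = 1 := by simp [hc]
    rw [this]
    ring
  have hnn : ∀ x, 0 ≤ x → 0 ≤ h x := fun x hx => h0 ▸ hmono hx
  -- the main function
  set F : ℝ → ℝ := fun x => p * x + x ^ 2 / 8 - Real.log (c + p * Real.exp x) with hF
  have Fder : ∀ x, HasDerivAt F (h x) x := by
    intro x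
    have he : HasDerivAt (fun y => p * Real.exp y) (p * Real.exp x) x :=
      (Real.hasDerivAt_exp x).const_mul p
    have hden : HasDerivAt (fun y => c + p * Real.exp y) (p * Real.exp x) x := he.const_add c
    have hlog := hden.log (pos x).ne'
    have hpoly : HasDerivAt (fun y : ℝ => p * y + y ^ 2 / 8) (p + 2 * x / 8) x := by
      have h1 : HasDerivAt (fun y : ℝ => p * y) p x := by
        simpa using (hasDerivAt_id x).const_mul p
      have h2 : HasDerivAt (fun y : ℝ => y ^ 2 / 8) (2 * x ^ 1 / 8) x := by
        simpa using (hasDerivAt_pow 2 x).div_const 8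
      exact h1.add (by simpa using h2)
    have : HasDerivAt F (p + 2 * x / 8 - p * Real.exp x / (c + p * Real.exp x)) x := hpoly.sub hlog
    convert this using 1
    simp only [hh]
    ring
  have FdiffOn : Differentiable ℝ F := fun x => (Fder x).differentiableAt
  have Fmono : MonotoneOn F (Set.Ici 0) := by
    apply monotoneOn_of_deriv_nonneg (convex_Ici 0) FdiffOn.continuous.continuousOn
      FdiffOn.differentiableOn
    intro x hx
    rw [interior_Ici] at hx
    rw [(Fder x).deriv]
    exact hnn x hx.le
  have F0 : F 0 = 0 := by
    simp only [hF, Real.exp_zero, mul_one, mul_zero]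
    have : c + p = 1 := by simp [hc]
    rw [this, Real.log_one]
    norm_num
  have key : Real.log (c + p * Real.exp s) ≤ p * s + s ^ 2 / 8 := by
    have := Fmono (Set.self_mem_Ici) (Set.mem_Ici.2 hs) hs
    rw [F0] at this
    simp only [hF] at this
    linarith
  calc c + p * Real.exp s = Real.exp (Real.log (c + p * Real.exp s)) :=
        (Real.exp_log (pos s)).symm
    _ ≤ Real.exp (p * s + s ^ 2 / 8) := Real.exp_le_exp.2 key

/-- The section (of `M` contiguous sections of `{0,…,Q-1}`, the first `Q mod M` of
length `⌈Q/M⌉` and the rest of length `⌊Q/M⌋`) containing position `p`. -/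
def sectionOf (Q M p : ℕ) : ℕ :=
  if p < (Q % M) * (Q / M + 1) then p / (Q / M + 1)
  else Q % M + (p - (Q % M) * (Q / M + 1)) / (Q / M)

lemma section_interval (Q M : ℕ) (hQ : 0 < Q) (hM : 0 < M) (m : ℕ) :
    ∃ lo len, len ≤ (Q + M - 1) / M ∧
      ∀ p : Fin Q, sectionOf Q M p = m → lo ≤ p.val ∧ p.val < lo + len := by
  obtain ⟨k, hk⟩ : ∃ k, Q / M = k := ⟨_, rfl⟩
  obtain ⟨q, hq⟩ : ∃ q, Q % M = q := ⟨_, rfl⟩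
  have hQeq : M * k + q = Q := by rw [← hk, ← hq]; exact Nat.div_add_mod Q M
  have hqM : q < M := by rw [← hq]; exact Nat.mod_lt Q hM
  have hkD : k ≤ (Q + M - 1) / M := by
    rw [← hk]; exact Nat.div_le_div_right (by omega)
  have hD1 : q ≠ 0 → (Q + M - 1) / M = k + 1 := by
    intro hq0
    have e1 : M * (k + 1) = M * k + M := by ring
    have : Q + M - 1 = M * (k + 1) + (q - 1) := by omega
    rw [this, Nat.mul_add_div hM, Nat.div_eq_of_lt (by omega), add_zero]
  by_cases hm : m < q
  · refine ⟨m * (k + 1), k + 1, by rw [hD1 (by omega)], ?_⟩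
    intro p hp
    unfold sectionOf at hp
    rw [hq, hk] at hp
    split_ifs at hp with hcond
    · constructor
      · calc m * (k + 1) = p.val / (k + 1) * (k + 1) := by rw [hp]
          _ ≤ p.val := Nat.div_mul_le_self _ _
      · have h1 : p.val / (k + 1) < m + 1 := by omega
        rw [Nat.div_lt_iff_lt_mul (by omega)] at h1
        have e2 : (m + 1) * (k + 1) = m * (k + 1) + (k + 1) := by ring
        omega
    · have hx : q ≤ q + (p.val - q * (k + 1)) / k := Nat.le_add_right _ _
      omega
  · by_cases hk0 : k = 0
    · refine ⟨0, 0, Nat.zero_le _, ?_⟩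
      intro p hp
      exfalso
      have hpQ : p.val < Q := p.isLt
      have hMk : M * k = 0 := by rw [hk0, mul_zero]
      have hQq : Q = q := by omega
      unfold sectionOf at hp
      rw [hq, hk, hk0] at hp
      split_ifs at hp with hcond
      · have h1 : p.val / (0 + 1) < q := by
          rw [Nat.div_lt_iff_lt_mul (by omega)]; omega
        omega
      · omega
    · refine ⟨q * (k + 1) + (m - q) * k, k, hkD, ?_⟩
      intro p hp
      unfold sectionOf at hp
      rw [hq, hk] at hp
      split_ifs at hp with hcond
      · exfalso
        have h1 : p.val / (k + 1) < q := by
          rw [Nat.div_lt_iff_lt_mul (by omega)]; omega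
        omega
      · have hj : (p.val - q * (k + 1)) / k = m - q := by omega
        have hge : q * (k + 1) ≤ p.val := by omega
        have hlo : (m - q) * k ≤ p.val - q * (k + 1) := by
          calc (m - q) * k = (p.val - q * (k + 1)) / k * k := by rw [hj]
            _ ≤ p.val - q * (k + 1) := Nat.div_mul_le_self _ _
        have hhi : p.val - q * (k + 1) < (m - q + 1) * k := by
          rw [← Nat.div_lt_iff_lt_mul (by omega)]; omega
        have e3 : (m - q + 1) * k = (m - q) * k + k := by ring
        omega

lemma card_section_le (Q M : ℕ) (hQ : 0 < Q) (hM : 0 < M) (m : ℕ) :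
    (univ.filter fun p : Fin Q => sectionOf Q M p = m).card ≤ (Q + M - 1) / M := by
  obtain ⟨lo, len, hlen, hmem⟩ := section_interval Q M hQ hM m
  calc (univ.filter fun p : Fin Q => sectionOf Q M p = m).card
      ≤ (Finset.Ico lo (lo + len)).card := by
        apply Finset.card_le_card_of_injOn (fun p => p.val)
        · intro p hp
          simp only [coe_filter, mem_filter, mem_univ, true_and, Set.mem_setOf_eq] at hp
          obtain ⟨h1, h2⟩ := hmem p hp
          simp [Finset.mem_Ico, h1, h2]
        · exact Fin.val_injective.injOn
    _ = len := by rw [Nat.card_Ico]; omega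
    _ ≤ _ := hlen

/-- `w` is `(M,r)`-balanced: each letter of `T` appears in each of the `M` sections
at most `(1/t)⌈Q/M⌉ + r` times. Note `(Q + M - 1)/M = ⌈Q/M⌉` for `M > 0`. -/
def IsBalanced (t Q M : ℕ) (r : ℝ) (w : Fin Q → Fin t) : Prop :=
  ∀ m < M, ∀ a : Fin t,
    (Set.ncard {p : Fin Q | sectionOf Q M p = m ∧ w p = a} : ℝ)
      ≤ (((Q + M - 1) / M : ℕ) : ℝ) / t + r


lemma sum_exp_count (t Q : ℕ) (ht : 0 < t) (a : Fin t) (C : Fin Q → Prop)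
    [DecidablePred C] (s : ℝ) :
    ∑ w : Fin Q → Fin t,
        Real.exp (s * ((univ.filter fun p => C p ∧ w p = a).card : ℝ))
      = ((t : ℝ) - 1 + Real.exp s) ^ (univ.filter C).card
          * (t : ℝ) ^ (univ.filter fun p => ¬ C p).card := by
  classical
  have step1 : ∀ w : Fin Q → Fin t,
      Real.exp (s * ((univ.filter fun p => C p ∧ w p = a).card : ℝ))
        = ∏ p : Fin Q, (if C p ∧ w p = a then Real.exp s else 1) := by
    intro w
    rw [Finset.prod_ite, Finset.prod_const, Finset.prod_const, one_pow, mul_one,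
      mul_comm s, Real.exp_nat_mul]
  simp_rw [step1]
  have step2 : ∑ w : Fin Q → Fin t, ∏ p : Fin Q, (if C p ∧ w p = a then Real.exp s else 1)
      = ∏ p : Fin Q, ∑ x : Fin t, (if C p ∧ x = a then Real.exp s else 1) := by
    rw [Finset.prod_univ_sum, Fintype.piFinset_univ]
  rw [step2]
  have step3 : ∀ p : Fin Q, ∑ x : Fin t, (if C p ∧ x = a then Real.exp s else 1)
      = if C p then ((t : ℝ) - 1 + Real.exp s) else (t : ℝ) := by
    intro p
    by_cases hC : C p
    · rw [if_pos hC]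
      simp only [hC, true_and]
      have : ∀ x : Fin t, (if x = a then Real.exp s else 1)
          = (if x = a then Real.exp s - 1 else 0) + 1 := by
        intro x; split <;> ring
      calc ∑ x : Fin t, (if x = a then Real.exp s else 1)
          = ∑ x : Fin t, ((if x = a then Real.exp s - 1 else 0) + 1) := by
            exact Finset.sum_congr rfl fun x _ => this x
        _ = (∑ x : Fin t, if x = a then Real.exp s - 1 else 0) + t := by
            rw [Finset.sum_add_distrib, Finset.sum_const, card_univ, Fintype.card_fin,
              nsmul_eq_mul, mul_one]
        _ = (Real.exp s - 1) + t := by rw [Finset.sum_ite_eq' univ a, if_pos (mem_univ a)]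
        _ = (t : ℝ) - 1 + Real.exp s := by ring
    · simp [hC]
  rw [Finset.prod_congr rfl fun p _ => step3 p, Finset.prod_ite,
    Finset.prod_const, Finset.prod_const]

lemma markov_bound (t Q : ℕ) (ht : 2 ≤ t) (hQ : 0 < Q) (a : Fin t) (C : Fin Q → Prop)
    [DecidablePred C] (D : ℕ) (hD : 1 ≤ D) (hL : (univ.filter C).card ≤ D)
    (N : ℝ) (hN : 2 ≤ N) :
    ((univ.filter fun w : Fin Q → Fin t =>
        (D : ℝ) / t + Real.sqrt ((D : ℝ) * Real.log N / 2)
          < ((univ.filter fun p => C p ∧ w p = a).card : ℝ)).card : ℝ)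
      < (t : ℝ) ^ Q / N := by
  classical
  have htR : (2 : ℝ) ≤ (t : ℝ) := by exact_mod_cast ht
  have htpos : (0 : ℝ) < t := by linarith
  have hNpos : (0 : ℝ) < N := by linarith
  have hlogN : 0 < Real.log N := Real.log_pos (by linarith)
  have hDR : (1 : ℝ) ≤ (D : ℝ) := by exact_mod_cast hD
  set r : ℝ := Real.sqrt ((D : ℝ) * Real.log N / 2) with hr
  have hr2 : r ^ 2 = (D : ℝ) * Real.log N / 2 := by
    rw [hr, Real.sq_sqrt (by positivity)]
  have hrpos : 0 < r := by
    rw [hr]; exact Real.sqrt_pos.2 (by positivity)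
  set s : ℝ := 4 * r / D with hs
  have hspos : 0 < s := by rw [hs]; positivity
  set p : ℝ := 1 / t with hp
  have hp0 : 0 < p := by rw [hp]; positivity
  have hp1 : p < 1 := by rw [hp]; rw [div_lt_one htpos]; linarith
  set θ : ℝ := (D : ℝ) / t + r with hθ
  set B := univ.filter fun w : Fin Q → Fin t =>
      θ < ((univ.filter fun p => C p ∧ w p = a).card : ℝ) with hB
  have hRHSpos : 0 < (t : ℝ) ^ Q / N := by positivity
  rcases B.eq_empty_or_nonempty with hBe | hBne
  · rw [hBe]; simpa using hRHSpos
  -- Markov: B.card * exp (s θ) < ∑ w, exp (s * cnt w)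
  have markov : (B.card : ℝ) * Real.exp (s * θ)
      < ∑ w : Fin Q → Fin t,
          Real.exp (s * ((univ.filter fun p => C p ∧ w p = a).card : ℝ)) := by
    have h1 : (B.card : ℝ) * Real.exp (s * θ)
        = ∑ _w ∈ B, Real.exp (s * θ) := by rw [Finset.sum_const, nsmul_eq_mul]
    rw [h1]
    have h2 : ∑ w ∈ B, Real.exp (s * θ)
        < ∑ w ∈ B, Real.exp (s * ((univ.filter fun p => C p ∧ w p = a).card : ℝ)) := by
      apply Finset.sum_lt_sum_of_nonempty hBne
      intro w hw
      rw [hB, mem_filter] at hw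
      exact Real.exp_lt_exp.2 (by nlinarith [hw.2])
    refine h2.trans_le ?_
    apply Finset.sum_le_sum_of_subset_of_nonneg (Finset.filter_subset _ _)
    intro w _ _
    positivity
  rw [sum_exp_count t Q (by omega) a C s] at markov
  -- bound the RHS
  set L := (univ.filter C).card with hLdef
  have hLc : (univ.filter fun p : Fin Q => ¬ C p).card = Q - L := by
    have := Finset.card_filter_add_card_filter_not (s := (univ : Finset (Fin Q)))
      (p := C)
    simp only [card_univ, Fintype.card_fin] at this
    omega

  have hLQ : L ≤ Q := by
    simpa using Finset.card_filter_le (univ : Finset (Fin Q)) C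
  have hfac : (t : ℝ) - 1 + Real.exp s ≤ (t : ℝ) * Real.exp (p * s + s ^ 2 / 8) := by
    have := hoeffding_mgf p hp0 hp1 hspos.le
    have he : (t : ℝ) - 1 + Real.exp s = (t : ℝ) * (1 - p + p * Real.exp s) := by
      rw [hp]; field_simp
    rw [he]
    exact mul_le_mul_of_nonneg_left this htpos.le
  have hfacpos : (0 : ℝ) ≤ (t : ℝ) - 1 + Real.exp s := by
    have := Real.exp_pos s; linarith
  have hbound : ((t : ℝ) - 1 + Real.exp s) ^ L * (t : ℝ) ^ (Q - L)
      ≤ (t : ℝ) ^ Q * Real.exp ((D : ℝ) * (p * s + s ^ 2 / 8)) := by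
    calc ((t : ℝ) - 1 + Real.exp s) ^ L * (t : ℝ) ^ (Q - L)
        ≤ ((t : ℝ) * Real.exp (p * s + s ^ 2 / 8)) ^ L * (t : ℝ) ^ (Q - L) := by
          apply mul_le_mul_of_nonneg_right (pow_le_pow_left₀ hfacpos hfac L) (by positivity)
      _ = (t : ℝ) ^ Q * Real.exp ((L : ℝ) * (p * s + s ^ 2 / 8)) := by
          rw [mul_pow, ← Real.exp_nat_mul]
          rw [mul_comm ((t:ℝ)^L) _, mul_assoc, ← pow_add]
          rw [Nat.add_sub_cancel' hLQ]
          ring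
      _ ≤ (t : ℝ) ^ Q * Real.exp ((D : ℝ) * (p * s + s ^ 2 / 8)) := by
          apply mul_le_mul_of_nonneg_left _ (by positivity)
          apply Real.exp_le_exp.2
          apply mul_le_mul_of_nonneg_right _ (by positivity)
          exact_mod_cast hL
  have hkey : (B.card : ℝ) * Real.exp (s * θ)
      < (t : ℝ) ^ Q * Real.exp ((D : ℝ) * (p * s + s ^ 2 / 8)) := by
    rw [hLc] at markov
    exact lt_of_lt_of_le markov hbound
  -- now compute the exponent
  have hDne : (D : ℝ) ≠ 0 := by positivity
  have hexp : (D : ℝ) * (p * s + s ^ 2 / 8) - s * θ = - Real.log N := by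
    have hθe : θ = (D : ℝ) * p + r := by rw [hθ, hp]; ring
    have hmid : (D : ℝ) * (p * s + s ^ 2 / 8) - s * ((D : ℝ) * p + r)
        = -(2 * r ^ 2) / D := by
      rw [hs]; field_simp; ring
    rw [hθe, hmid, hr2]
    field_simp
  have hfinal : (B.card : ℝ) < (t : ℝ) ^ Q / N := by
    have h3 : (B.card : ℝ) < (t : ℝ) ^ Q * Real.exp ((D : ℝ) * (p * s + s ^ 2 / 8))
        / Real.exp (s * θ) := by
      rw [lt_div_iff₀ (Real.exp_pos _)]
      exact hkey
    have h4 : (t : ℝ) ^ Q * Real.exp ((D : ℝ) * (p * s + s ^ 2 / 8)) / Real.exp (s * θ)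
        = (t : ℝ) ^ Q * Real.exp ((D : ℝ) * (p * s + s ^ 2 / 8) - s * θ) := by
      rw [Real.exp_sub]; ring
    rw [h4, hexp] at h3
    calc (B.card : ℝ) < (t : ℝ) ^ Q * Real.exp (- Real.log N) := h3
      _ = (t : ℝ) ^ Q / N := by
          rw [Real.exp_neg, Real.exp_log hNpos]; ring
  exact hfinal

/-- with `r = sqrt(⌈Q/M⌉ ln(M t 2^i)/2)`, fewer than `t^Q 2^{-i}`
strings of `T^Q` are `(M,r)`-unbalanced. -/
theorem unbalanced_count (t Q M i : ℕ) (ht : 2 ≤ t) (hQ : 0 < Q) (hM : 0 < M)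
    (hi : 1 ≤ i) :
    (Set.ncard {w : Fin Q → Fin t | ¬ IsBalanced t Q M
        (Real.sqrt ((((Q + M - 1) / M : ℕ) : ℝ) * Real.log (M * t * 2 ^ i) / 2)) w} : ℝ)
      < (t : ℝ) ^ Q / 2 ^ i := by
  classical
  set D : ℕ := (Q + M - 1) / M with hDdef
  set N : ℝ := (M : ℝ) * t * 2 ^ i with hNdef
  have hD : 1 ≤ D := by
    rw [hDdef, Nat.one_le_div_iff hM]; omega
  have hMR : (1 : ℝ) ≤ (M : ℝ) := by exact_mod_cast hM
  have htR : (2 : ℝ) ≤ (t : ℝ) := by exact_mod_cast ht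
  have h2i : (1 : ℝ) ≤ (2 : ℝ) ^ i := one_le_pow₀ (by norm_num)
  have hN : 2 ≤ N := by
    rw [hNdef]
    calc (2 : ℝ) ≤ (M : ℝ) * t := by nlinarith
      _ = (M : ℝ) * t * 1 := by ring
      _ ≤ (M : ℝ) * t * 2 ^ i := by
          apply mul_le_mul_of_nonneg_left h2i (by positivity)
  have h2ipos : (0 : ℝ) < 2 ^ i := by positivity
  set r : ℝ := Real.sqrt ((D : ℝ) * Real.log N / 2) with hr
  -- the bad finsets
  set B : ℕ → Fin t → Finset (Fin Q → Fin t) := fun m a =>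
    univ.filter fun w => (D : ℝ) / t + r
      < ((univ.filter fun p : Fin Q => sectionOf Q M p = m ∧ w p = a).card : ℝ) with hBdef
  have hcard : ∀ (m : ℕ) (a : Fin t), ((B m a).card : ℝ) < (t : ℝ) ^ Q / N := by
    intro m a
    exact markov_bound t Q ht hQ a (fun p : Fin Q => sectionOf Q M p = m) D hD
      (card_section_le Q M hQ hM m) N hN
  have hncard : ∀ (w : Fin Q → Fin t) (m : ℕ) (a : Fin t),
      ({p : Fin Q | sectionOf Q M p = m ∧ w p = a}.ncard : ℝ)
        = ((univ.filter fun p : Fin Q => sectionOf Q M p = m ∧ w p = a).card : ℝ) := by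
    intro w m a
    rw [Set.ncard_eq_toFinset_card', Set.toFinset_setOf]
  -- rewrite the ncard of the unbalanced set
  rw [Set.ncard_eq_toFinset_card', Set.toFinset_setOf]
  set U := univ.filter fun w : Fin Q → Fin t => ¬ IsBalanced t Q M r w with hUdef
  have hsub : U ⊆ (Finset.range M ×ˢ (univ : Finset (Fin t))).biUnion
      fun q => B q.1 q.2 := by
    intro w hw
    rw [hUdef, mem_filter] at hw
    have hw2 := hw.2
    rw [IsBalanced] at hw2
    push_neg at hw2
    obtain ⟨m, hm, a, hma⟩ := hw2
    rw [Finset.mem_biUnion]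
    refine ⟨(m, a), ?_, ?_⟩
    · rw [Finset.mem_product]; exact ⟨Finset.mem_range.2 hm, mem_univ a⟩
    · rw [hBdef, mem_filter]
      refine ⟨mem_univ w, ?_⟩
      rw [← hncard w m a]
      exact hma
  have hle : (U.card : ℝ)
      ≤ ∑ q ∈ Finset.range M ×ˢ (univ : Finset (Fin t)), ((B q.1 q.2).card : ℝ) := by
    calc (U.card : ℝ)
        ≤ (((Finset.range M ×ˢ (univ : Finset (Fin t))).biUnion
            fun q => B q.1 q.2).card : ℝ) := by
          exact_mod_cast Finset.card_le_card hsub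
      _ ≤ _ := by
          push_cast
          exact_mod_cast Finset.card_biUnion_le
  have hne : (Finset.range M ×ˢ (univ : Finset (Fin t))).Nonempty := by
    refine ⟨(0, ⟨0, by omega⟩), ?_⟩
    rw [Finset.mem_product]
    exact ⟨Finset.mem_range.2 hM, mem_univ _⟩
  have hlt : ∑ q ∈ Finset.range M ×ˢ (univ : Finset (Fin t)), ((B q.1 q.2).card : ℝ)
      < ∑ _q ∈ Finset.range M ×ˢ (univ : Finset (Fin t)), (t : ℝ) ^ Q / N :=
    Finset.sum_lt_sum_of_nonempty hne fun q _ => hcard q.1 q.2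
  have hsum : ∑ _q ∈ Finset.range M ×ˢ (univ : Finset (Fin t)), (t : ℝ) ^ Q / N
      = (t : ℝ) ^ Q / 2 ^ i := by
    rw [Finset.sum_const, Finset.card_product, Finset.card_range, card_univ,
      Fintype.card_fin, nsmul_eq_mul, hNdef]
    have hM0 : (M : ℝ) ≠ 0 := by linarith
    have ht0 : (t : ℝ) ≠ 0 := by linarith
    have h2i0 : (2 : ℝ) ^ i ≠ 0 := by positivity
    push_cast
    field_simp
  calc (U.card : ℝ) ≤ _ := hle
    _ < _ := hlt
    _ = _ := hsum
end

section
/- Let t ≥ 2 be a prime power and Q ≥ 1, R ≥ 0 integers. Then A_t(Q, 2R+1) ≥ t^{Q - ⌈log_t(1 + ∑_{i=0}^{2R-1} C(Q-1,i)(t-1)^i)⌉}. -/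
open Finset

/-- Auxiliary: the number of vectors with prescribed (exact) support `s` is at most
`(|F| - 1) ^ |s|`. -/
lemma varshamov_supp_card_le {F : Type} [Field F] [Fintype F] [DecidableEq F] {Q : ℕ}
    (s : Finset (Fin Q)) :
    (univ.filter fun y : Fin Q → F => univ.filter (fun k => y k ≠ 0) = s).card
      ≤ (Fintype.card F - 1) ^ s.card := by
  classical
  have h := Finset.card_le_card_of_injOn
    (f := fun (y : Fin Q → F) (i : s) =>
      if h : y i.1 ≠ 0 then (⟨y i.1, h⟩ : {a : F // a ≠ 0}) else ⟨1, one_ne_zero⟩)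
    (s := univ.filter fun y : Fin Q → F => univ.filter (fun k => y k ≠ 0) = s)
    (t := (univ : Finset (s → {a : F // a ≠ 0})))
    (fun y _ => mem_univ _) ?_
  · refine h.trans ?_
    rw [card_univ, Fintype.card_fun, Fintype.card_coe]
    have : Fintype.card {a : F // a ≠ 0} = Fintype.card F - 1 := by
      rw [Fintype.card_subtype_compl, Fintype.card_subtype_eq]
    rw [this]
  · intro y hy y' hy' hee
    simp only [coe_filter, Set.mem_setOf_eq, mem_univ, true_and] at hy hy'
    funext k
    by_cases hk : k ∈ s
    · have h1 : y k ≠ 0 := by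
        have hk1 : k ∈ univ.filter (fun k => y k ≠ 0) := by rw [hy]; exact hk
        exact (mem_filter.1 hk1).2
      have h2 : y' k ≠ 0 := by
        have hk1 : k ∈ univ.filter (fun k => y' k ≠ 0) := by rw [hy']; exact hk
        exact (mem_filter.1 hk1).2
      have := congrFun hee ⟨k, hk⟩
      simpa [dif_pos h1, dif_pos h2] using congrArg Subtype.val this
    · have h1 : ¬ y k ≠ 0 := fun h => hk (by rw [← hy]; exact mem_filter.2 ⟨mem_univ _, h⟩)
      have h2 : ¬ y' k ≠ 0 := fun h => hk (by rw [← hy']; exact mem_filter.2 ⟨mem_univ _, h⟩)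
      push_neg at h1 h2; rw [h1, h2]

/-- Auxiliary counting: vectors supported in `T` of weight `< r`. -/
lemma varshamov_count {F : Type} [Field F] [Fintype F] [DecidableEq F] {Q : ℕ}
    (T : Finset (Fin Q)) (r : ℕ) :
    (univ.filter fun y : Fin Q → F =>
        (∀ k, y k ≠ 0 → k ∈ T) ∧ hammingNorm y < r).card
      ≤ ∑ i ∈ range r, T.card.choose i * (Fintype.card F - 1) ^ i := by
  classical
  have hnorm : ∀ y : Fin Q → F, hammingNorm y = (univ.filter fun k => y k ≠ 0).card := by
    intro y; rfl
  have hsub : (univ.filter fun y : Fin Q → F =>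
        (∀ k, y k ≠ 0 → k ∈ T) ∧ hammingNorm y < r)
      ⊆ ((range r).biUnion fun i => T.powersetCard i).biUnion
          (fun s => univ.filter fun y : Fin Q → F => univ.filter (fun k => y k ≠ 0) = s) := by
    intro y hy
    simp only [mem_filter, mem_univ, true_and] at hy
    refine mem_biUnion.2 ⟨univ.filter (fun k => y k ≠ 0), ?_, ?_⟩
    · refine mem_biUnion.2 ⟨hammingNorm y, mem_range.2 hy.2, ?_⟩
      rw [mem_powersetCard]
      exact ⟨fun k hk => hy.1 k (mem_filter.1 hk).2, (hnorm y).symm⟩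
    · simp
  refine (card_le_card hsub).trans ?_
  refine (card_biUnion_le).trans ?_
  rw [Finset.sum_biUnion]
  · refine Finset.sum_le_sum fun i _ => ?_
    calc ∑ s ∈ T.powersetCard i,
          (univ.filter fun y : Fin Q → F => univ.filter (fun k => y k ≠ 0) = s).card
        ≤ ∑ s ∈ T.powersetCard i, (Fintype.card F - 1) ^ i := by
          refine Finset.sum_le_sum fun s hs => ?_
          have := varshamov_supp_card_le (F := F) s
          rwa [(mem_powersetCard.1 hs).2] at this
      _ = T.card.choose i * (Fintype.card F - 1) ^ i := by
          rw [Finset.sum_const, card_powersetCard, smul_eq_mul]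
  · exact fun i _ j _ hij => T.pairwise_disjoint_powersetCard hij

/-- Greedy construction of the columns of a parity-check matrix in which every
column avoids all small linear combinations of earlier columns. -/
lemma varshamov_greedy {F : Type} [Field F] [Fintype F] [DecidableEq F]
    {Q R K : ℕ}
    (hcard : ∑ i ∈ range (2*R), (Q-1).choose i * (Fintype.card F - 1) ^ i
        < Fintype.card (Fin K → F)) :
    ∃ c : Fin Q → (Fin K → F), ∀ j : Fin Q, ∀ y : Fin Q → F,
      (∀ k, y k ≠ 0 → k < j) → hammingNorm y < 2*R → c j ≠ ∑ k, y k • c k := by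
  classical
  suffices h : ∀ m, ∃ c : Fin Q → (Fin K → F), ∀ j : Fin Q, (j : ℕ) < m →
      ∀ y : Fin Q → F, (∀ k, y k ≠ 0 → k < j) → hammingNorm y < 2*R →
        c j ≠ ∑ k, y k • c k by
    obtain ⟨c, hc⟩ := h Q
    exact ⟨c, fun j => hc j j.isLt⟩
  intro m
  induction m with
  | zero => exact ⟨fun _ => 0, fun j hj => absurd hj (Nat.not_lt_zero _)⟩
  | succ n ih =>
    obtain ⟨c, hc⟩ := ih
    by_cases hn : n < Q
    · set jn : Fin Q := ⟨n, hn⟩ with hjn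
      set B := (univ.filter fun y : Fin Q → F =>
          (∀ k, y k ≠ 0 → k < jn) ∧ hammingNorm y < 2*R).image
          (fun y => ∑ k, y k • c k) with hB
      have hBcard : B.card < Fintype.card (Fin K → F) := by
        refine lt_of_le_of_lt ((card_image_le).trans ?_) hcard
        have heq : (univ.filter fun y : Fin Q → F =>
              (∀ k, y k ≠ 0 → k < jn) ∧ hammingNorm y < 2*R)
            = (univ.filter fun y : Fin Q → F =>
              (∀ k, y k ≠ 0 → k ∈ Finset.Iio jn) ∧ hammingNorm y < 2*R) := by
          simp [Finset.mem_Iio]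
        rw [heq]
        refine (varshamov_count (F := F) (Finset.Iio jn) (2*R)).trans ?_
        refine Finset.sum_le_sum fun i _ => ?_
        have h1 : (Finset.Iio jn).card ≤ Q - 1 := by
          rw [Fin.card_Iio]; omega
        exact Nat.mul_le_mul_right _ (Nat.choose_le_choose i h1)
      obtain ⟨v, hv⟩ : ∃ v : Fin K → F, v ∉ B := by
        by_contra hcon
        push_neg at hcon
        have : (univ : Finset (Fin K → F)).card ≤ B.card :=
          card_le_card fun v _ => hcon v
        rw [card_univ] at this
        omega
      refine ⟨Function.update c jn v, fun j hj y hy hw => ?_⟩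
      have hsum : ∑ k, y k • Function.update c jn v k = ∑ k, y k • c k := by
        refine Finset.sum_congr rfl fun k _ => ?_
        by_cases hyk : y k = 0
        · simp [hyk]
        · have hkj : k < j := hy k hyk
          have : k ≠ jn := by
            intro hkk
            have : (j : ℕ) ≤ n := Nat.lt_succ_iff.1 hj
            have : (k : ℕ) < (j : ℕ) := hkj
            simp [hkk, hjn] at this ⊢
            omega
          rw [Function.update_of_ne this]
      rcases Nat.lt_succ_iff_lt_or_eq.1 hj with hjlt | hjeq
      · have hjne : j ≠ jn := by
          intro hkk; rw [hkk] at hjlt; simp [hjn] at hjlt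
        rw [Function.update_of_ne hjne, hsum]
        exact hc j hjlt y hy hw
      · have hjeq' : j = jn := Fin.ext hjeq
        subst hjeq'
        rw [Function.update_self, hsum]
        intro hcontra
        exact hv (Finset.mem_image.2 ⟨y, mem_filter.2 ⟨mem_univ _, hy, hw⟩, hcontra.symm⟩)
    · refine ⟨c, fun j hj => hc j ?_⟩
      have := j.isLt; omega

/-- Any vector in the kernel of the greedily-constructed parity check map
with Hamming weight at most `2R` is zero. -/
lemma varshamov_minwt {F : Type} [Field F] [Fintype F] [DecidableEq F]
    {Q R K : ℕ} (c : Fin Q → (Fin K → F))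
    (hc : ∀ j : Fin Q, ∀ y : Fin Q → F,
      (∀ k, y k ≠ 0 → k < j) → hammingNorm y < 2*R → c j ≠ ∑ k, y k • c k)
    (x : Fin Q → F) (hx : ∑ k, x k • c k = 0) (hw : hammingNorm x ≤ 2*R) :
    x = 0 := by
  classical
  by_contra hx0
  set s : Finset (Fin Q) := univ.filter (fun k => x k ≠ 0) with hs
  have hsne : s.Nonempty := by
    rcases Function.ne_iff.1 hx0 with ⟨k, hk⟩
    exact ⟨k, mem_filter.2 ⟨mem_univ _, by simpa using hk⟩⟩
  set j := s.max' hsne with hj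
  have hjs : j ∈ s := s.max'_mem hsne
  have hxj : x j ≠ 0 := (mem_filter.1 hjs).2
  set y : Fin Q → F := fun k => if k = j then 0 else -(x j)⁻¹ * x k with hy
  have hysupp : ∀ k, y k ≠ 0 → k < j := by
    intro k hk
    by_cases hkj : k = j
    · simp [hy, hkj] at hk
    · have hxk : x k ≠ 0 := by
        simp only [hy, if_neg hkj, ne_eq, neg_mul, neg_eq_zero, mul_eq_zero, not_or] at hk
        exact hk.2
      have hks : k ∈ s := mem_filter.2 ⟨mem_univ _, hxk⟩
      exact lt_of_le_of_ne (s.le_max' k hks) hkj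
  have hynorm : hammingNorm y < 2*R := by
    have hsub : (univ.filter fun k => y k ≠ 0) ⊆ s.erase j := by
      intro k hk
      have hk' := (mem_filter.1 hk).2
      refine Finset.mem_erase.2 ⟨(hysupp k hk').ne, ?_⟩
      by_cases hkj : k = j
      · exact absurd rfl (hkj ▸ (hysupp k hk').ne)
      · refine mem_filter.2 ⟨mem_univ _, ?_⟩
        simp only [hy, if_neg hkj, ne_eq, neg_mul, neg_eq_zero, mul_eq_zero, not_or] at hk'
        exact hk'.2
    have h1 : hammingNorm y ≤ (s.erase j).card := Finset.card_le_card hsub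
    have h2 : (s.erase j).card = s.card - 1 := Finset.card_erase_of_mem hjs
    have h3 : s.card = hammingNorm x := rfl
    have hpos : 0 < s.card := Finset.card_pos.2 hsne
    omega
  apply hc j y hysupp hynorm
  have hsplit : x j • c j + ∑ k ∈ univ.erase j, x k • c k = 0 := by
    rw [Finset.add_sum_erase univ (fun k => x k • c k) (mem_univ j)]
    exact hx
  have hyerase : ∑ k, y k • c k = ∑ k ∈ univ.erase j, (-(x j)⁻¹ * x k) • c k := by
    rw [← Finset.add_sum_erase univ (fun k => y k • c k) (mem_univ j)]
    simp only [hy, if_pos rfl, zero_smul, zero_add]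
    refine Finset.sum_congr rfl fun k hk => ?_
    rw [if_neg (Finset.mem_erase.1 hk).1]
  rw [hyerase]
  have hfac : ∑ k ∈ univ.erase j, (-(x j)⁻¹ * x k) • c k
      = (-(x j)⁻¹) • ∑ k ∈ univ.erase j, x k • c k := by
    rw [Finset.smul_sum]
    exact Finset.sum_congr rfl fun k _ => (smul_smul _ _ _).symm
  rw [hfac]
  have hsum : ∑ k ∈ univ.erase j, x k • c k = -(x j • c j) := by
    linear_combination (norm := module) hsplit
  rw [hsum, smul_neg, neg_smul, neg_neg, smul_smul, inv_mul_cancel₀ hxj, one_smul]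

/-- `A t Q d`: the maximum number of codewords in a code of length `Q` over an
alphabet of size `t` with minimum Hamming distance `d`. -/
noncomputable def maxCode (t Q d : ℕ) : ℕ :=
  sSup {n : ℕ | ∃ s : Finset (Fin Q → Fin t),
    (∀ x ∈ s, ∀ y ∈ s, x ≠ y → d ≤ hammingDist x y) ∧ s.card = n}

/-- Varshamov bound: for `t` a prime power,
`A_t(Q,2R+1) ≥ t^{Q - ⌈log_t(1 + ∑_{i=0}^{2R-1} C(Q-1,i)(t-1)^i)⌉}`.
`Nat.clog` is the ceiling logarithm. -/
theorem varshamov (t Q R : ℕ) (ht : IsPrimePow t) (hQ : 1 ≤ Q) :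
    t ^ (Q - Nat.clog t
        (1 + ∑ i ∈ Finset.range (2 * R), Nat.choose (Q - 1) i * (t - 1) ^ i))
      ≤ maxCode t Q (2 * R + 1) := by
  classical
  obtain ⟨p, m, hp, hm, rfl⟩ := ht
  have hp' : Nat.Prime p := Nat.prime_iff.2 hp
  haveI := Fact.mk hp'
  set F := GaloisField p m with hF
  haveI : Fintype F := Fintype.ofFinite F
  have hFcard : Fintype.card F = p ^ m := by
    rw [← Nat.card_eq_fintype_card, GaloisField.card p m (by omega)]
  have ht2 : 2 ≤ p ^ m := by
    have := hp'.two_le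
    calc 2 ≤ p := this
    _ ≤ p ^ m := Nat.le_self_pow (by omega) p
  set N := ∑ i ∈ Finset.range (2 * R), Nat.choose (Q - 1) i * (p ^ m - 1) ^ i with hN
  set K := Nat.clog (p ^ m) (1 + N) with hK
  have hKpow : 1 + N ≤ (p ^ m) ^ K := Nat.le_pow_clog (by omega) _
  have hcard : ∑ i ∈ range (2*R), (Q-1).choose i * (Fintype.card F - 1) ^ i
      < Fintype.card (Fin K → F) := by
    rw [Fintype.card_fun, Fintype.card_fin, hFcard]
    omega
  obtain ⟨c, hc⟩ := varshamov_greedy (F := F) (Q := Q) (R := R) (K := K) hcard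
  -- the parity-check linear map
  set L : (Fin Q → F) →ₗ[F] (Fin K → F) :=
    { toFun := fun x => ∑ k, x k • c k
      map_add' := fun a b => by
        simp [add_smul, Finset.sum_add_distrib]
      map_smul' := fun r a => by
        simp [Finset.smul_sum, mul_smul] } with hL
  haveI : Fintype ↥(LinearMap.ker L) := Fintype.ofFinite _
  -- size of the kernel
  have hrn := LinearMap.finrank_range_add_finrank_ker L
  rw [Module.finrank_fintype_fun_eq_card, Fintype.card_fin] at hrn
  have hrange : Module.finrank F ↥(LinearMap.range L) ≤ K := by
    have h := Submodule.finrank_le (LinearMap.range L)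
    rwa [Module.finrank_fintype_fun_eq_card, Fintype.card_fin] at h
  have hkerrank : Q - K ≤ Module.finrank F ↥(LinearMap.ker L) := by omega
  have hcardker : (p ^ m) ^ (Q - K) ≤ Fintype.card ↥(LinearMap.ker L) := by
    rw [Module.card_eq_pow_finrank (K := F), hFcard]
    exact Nat.pow_le_pow_right (by omega) hkerrank
  -- the code
  set e : F ≃ Fin (p ^ m) := Fintype.equivFinOfCardEq hFcard with he
  set f : ↥(LinearMap.ker L) → (Fin Q → Fin (p ^ m)) :=
    fun z => fun i => e (z.1 i) with hf
  have hinj : Function.Injective f := by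
    intro z w h
    apply Subtype.ext
    funext i
    exact e.injective (congrFun h i)
  set s : Finset (Fin Q → Fin (p ^ m)) := Finset.univ.image f with hsdef
  have hscard : s.card = Fintype.card ↥(LinearMap.ker L) := by
    rw [hsdef, Finset.card_image_of_injective _ hinj, card_univ]
  have hdist : ∀ a ∈ s, ∀ b ∈ s, a ≠ b → 2 * R + 1 ≤ hammingDist a b := by
    intro a ha b hb hab
    obtain ⟨za, -, rfl⟩ := Finset.mem_image.1 ha
    obtain ⟨zb, -, rfl⟩ := Finset.mem_image.1 hb
    have hzz : (za : Fin Q → F) ≠ (zb : Fin Q → F) := by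
      intro h
      exact hab (congrArg f (Subtype.ext h))
    have hcomp : hammingDist (f za) (f zb) = hammingDist (za : Fin Q → F) (zb : Fin Q → F) :=
      hammingDist_comp (fun _ => e) (fun _ => e.injective)
    rw [hcomp, hammingDist_eq_hammingNorm]
    by_contra hlt
    push_neg at hlt
    have hwle : hammingNorm ((za : Fin Q → F) - (zb : Fin Q → F)) ≤ 2 * R := by
      rw [sub_eq_neg_add, ← hammingDist_eq_hammingNorm, hammingDist_comm, hammingDist_eq_hammingNorm]; omega
    have hmemk : (za : Fin Q → F) - (zb : Fin Q → F) ∈ LinearMap.ker L :=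
      sub_mem za.2 zb.2
    have h0 : ∑ k, ((za : Fin Q → F) - (zb : Fin Q → F)) k • c k = 0 := LinearMap.mem_ker.1 hmemk
    have := varshamov_minwt (R := R) c hc _ h0 hwle
    exact hzz (sub_eq_zero.1 this)
  have hbdd : BddAbove {n : ℕ | ∃ s' : Finset (Fin Q → Fin (p ^ m)),
      (∀ x ∈ s', ∀ y ∈ s', x ≠ y → 2 * R + 1 ≤ hammingDist x y) ∧ s'.card = n} := by
    refine ⟨(p ^ m) ^ Q, ?_⟩
    rintro u ⟨s', -, rfl⟩
    calc s'.card ≤ (univ : Finset (Fin Q → Fin (p ^ m))).card := Finset.card_le_univ s'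
      _ = (p ^ m) ^ Q := by rw [card_univ, Fintype.card_fun, Fintype.card_fin, Fintype.card_fin]
  have hmem : s.card ∈ {n : ℕ | ∃ s' : Finset (Fin Q → Fin (p ^ m)),
      (∀ x ∈ s', ∀ y ∈ s', x ≠ y → 2 * R + 1 ≤ hammingDist x y) ∧ s'.card = n} :=
    ⟨s, hdist, rfl⟩
  calc (p ^ m) ^ (Q - K) ≤ Fintype.card ↥(LinearMap.ker L) := hcardker
    _ = s.card := hscard.symm
    _ ≤ maxCode (p ^ m) Q (2 * R + 1) := le_csSup hbdd hmem
end

section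
/- Let t ≥ 2 and k ≥ R ≥ 0, and let c_k = (k²+3k-2)/2 and 0 < c₉ < 1 be constants. Then for all sufficiently large Q, A_t(Q - c_k, 2R+1) > c₉ · (2R-1)!/(2^{2R}(t-1)^{2R-1}) · t^{Q - c_k - 1}/Q^{2R-1}. -/
open Finset


/-- Cardinality of functions with support of size ≤ s (Hamming ball around 0). -/
lemma ball_card_le (j p s : ℕ) (hp : 2 ≤ p) :
    haveI : NeZero p := ⟨by omega⟩
    (Finset.univ.filter fun c : Fin j → ZMod p =>
        (Finset.univ.filter fun i => c i ≠ 0).card ≤ s).card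
      ≤ ∑ i ∈ Finset.range (s+1), j.choose i * (p-1)^i := by
  haveI : NeZero p := ⟨by omega⟩
  haveI : Fact (1 < p) := ⟨by omega⟩
  set B := (Finset.univ.filter fun c : Fin j → ZMod p =>
        (Finset.univ.filter fun i => c i ≠ 0).card ≤ s) with hB
  set 𝒮 : Finset (Finset (Fin j)) := Finset.univ.powerset.filter (fun S => S.card ≤ s) with hS
  have hcard : B.card = ∑ S ∈ 𝒮, (B.filter fun c => (Finset.univ.filter fun i => c i ≠ 0) = S).card := by
    apply Finset.card_eq_sum_card_fiberwise
    intro c hc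
    simp only [hS, Finset.mem_coe, Finset.mem_filter, Finset.mem_powerset]
    exact ⟨Finset.subset_univ _, (Finset.mem_filter.mp (Finset.mem_coe.mp hc)).2⟩
  rw [hcard]
  have hfib : ∀ S ∈ 𝒮, (B.filter fun c => (Finset.univ.filter fun i => c i ≠ 0) = S).card ≤ (p-1)^S.card := by
    intro S _
    have hpm1 : (p-1)^S.card = Fintype.card (S → {x : ZMod p // x ≠ 0}) := by
      rw [Fintype.card_fun, Fintype.card_coe]
      congr 1
      rw [Fintype.card_subtype_compl, ZMod.card, Fintype.card_subtype_eq]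
    rw [hpm1, ← Finset.card_univ]
    apply Finset.card_le_card_of_injOn
      (fun c => fun i : S => if h : c i ≠ 0 then (⟨c i, h⟩ : {x : ZMod p // x ≠ 0}) else ⟨1, one_ne_zero⟩)
      (fun _ _ => Finset.mem_univ _)
    intro c hc c' hc' hf
    simp only [Finset.coe_filter, Set.mem_setOf_eq] at hc hc'
    funext i
    by_cases hiS : i ∈ S
    · have h1 : c i ≠ 0 := by
        have hmem : i ∈ Finset.univ.filter fun i => c i ≠ 0 := by rw [hc.2]; exact hiS
        simpa using hmem
      have h2 : c' i ≠ 0 := by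
        have hmem : i ∈ Finset.univ.filter fun i => c' i ≠ 0 := by rw [hc'.2]; exact hiS
        simpa using hmem
      have := congrFun hf ⟨i, hiS⟩
      simp only [dif_pos h1, dif_pos h2] at this
      exact congrArg Subtype.val this
    · have h1 : c i = 0 := by
        by_contra h
        exact hiS (hc.2 ▸ (by simpa using h : i ∈ Finset.univ.filter fun i => c i ≠ 0))
      have h2 : c' i = 0 := by
        by_contra h
        exact hiS (hc'.2 ▸ (by simpa using h : i ∈ Finset.univ.filter fun i => c' i ≠ 0))
      rw [h1, h2]
  calc ∑ S ∈ 𝒮, (B.filter fun c => (Finset.univ.filter fun i => c i ≠ 0) = S).card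
      ≤ ∑ S ∈ 𝒮, (p-1)^S.card := Finset.sum_le_sum hfib
    _ = ∑ i ∈ Finset.range (s+1), j.choose i * (p-1)^i := by
        have h𝒮 : 𝒮 = (Finset.range (s+1)).biUnion
            (fun i => Finset.powersetCard i (Finset.univ : Finset (Fin j))) := by
          ext S
          simp only [hS, Finset.mem_filter, Finset.mem_powerset, Finset.mem_biUnion,
            Finset.mem_range, Finset.mem_powersetCard]
          constructor
          · rintro ⟨h1, h2⟩
            exact ⟨S.card, Nat.lt_succ_of_le h2, h1, rfl⟩
          · rintro ⟨i, hi, h1, rfl⟩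
            exact ⟨h1, Nat.lt_succ_iff.mp hi⟩
        rw [h𝒮, Finset.sum_biUnion]
        · apply Finset.sum_congr rfl
          intro i _
          rw [Finset.sum_congr rfl (fun S hS => by
            rw [(Finset.mem_powersetCard.mp hS).2]), Finset.sum_const, Finset.card_powersetCard,
            Finset.card_univ, Fintype.card_fin, smul_eq_mul]
        · intro a ha b hb hab
          apply Finset.disjoint_left.mpr
          intro S hSa hSb
          exact hab ((Finset.mem_powersetCard.mp hSa).2.symm ▸ (Finset.mem_powersetCard.mp hSb).2)


lemma greedy (p m s N : ℕ) [Fact p.Prime]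
    (hV : ∑ i ∈ Finset.range (s+1), N.choose i * (p-1)^i < p^m) :
    ∀ n, n ≤ N + 1 → ∃ H : Fin n → (Fin m → ZMod p),
      ∀ c : Fin n → ZMod p, c ≠ 0 →
        (Finset.univ.filter fun i => c i ≠ 0).card ≤ s + 1 →
        ∑ i, c i • H i ≠ 0 := by
  intro n
  induction n with
  | zero =>
    intro _
    exact ⟨fun i => 0, fun c hc _ => absurd (Subsingleton.elim c 0) hc⟩
  | succ n ih =>
    intro hn
    obtain ⟨H, hH⟩ := ih (by omega)
    set Bad : Finset (Fin m → ZMod p) :=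
      ((Finset.univ.filter fun c : Fin n → ZMod p =>
        (Finset.univ.filter fun i => c i ≠ 0).card ≤ s).image
          (fun c => ∑ i, c i • H i)) with hBad
    have hp2 : 2 ≤ p := (Fact.out : p.Prime).two_le
    have hcard : Bad.card < p^m := by
      calc Bad.card ≤ _ := Finset.card_image_le
        _ ≤ ∑ i ∈ Finset.range (s+1), n.choose i * (p-1)^i := ball_card_le n p s hp2
        _ ≤ ∑ i ∈ Finset.range (s+1), N.choose i * (p-1)^i := by
            apply Finset.sum_le_sum
            intro i _
            exact Nat.mul_le_mul_right _ (Nat.choose_le_choose i (by omega))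
        _ < p^m := hV
    have hv : ∃ v : Fin m → ZMod p, v ∉ Bad := by
      by_contra h
      push_neg at h
      have h2 : (Finset.univ : Finset (Fin m → ZMod p)) ⊆ Bad := fun v _ => h v
      have h3 := Finset.card_le_card h2
      rw [Finset.card_univ] at h3
      simp [ZMod.card] at h3
      omega
    obtain ⟨v, hv⟩ := hv
    refine ⟨Fin.snoc H v, ?_⟩
    intro c hc hsupp hsum
    set c' : Fin n → ZMod p := fun i => c i.castSucc with hc'
    rw [Fin.sum_univ_castSucc] at hsum
    simp only [Fin.snoc_castSucc, Fin.snoc_last] at hsum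
    by_cases hlast : c (Fin.last n) = 0
    · rw [hlast, zero_smul, add_zero] at hsum
      have hc'ne : c' ≠ 0 := by
        intro h0
        apply hc
        funext i
        rcases Fin.eq_castSucc_or_eq_last i with ⟨j, rfl⟩ | rfl
        · exact congrFun h0 j
        · exact hlast
      have hsupp' : (Finset.univ.filter fun i => c' i ≠ 0).card ≤ s + 1 := by
        refine le_trans (Finset.card_le_card_of_injOn Fin.castSucc ?_ ?_) hsupp
        · intro i hi
          simp only [Finset.mem_coe, Finset.mem_filter, Finset.mem_univ, true_and] at hi ⊢
          exact hi
        · exact fun a _ b _ hab => Fin.castSucc_injective n hab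
      exact hH c' hc'ne hsupp' hsum
    · -- c (last) ≠ 0 : v is a combination of ≤ s columns, contradiction
      have hsupp' : (Finset.univ.filter fun i => c' i ≠ 0).card ≤ s := by
        have h1 : (Finset.univ.filter fun i => c' i ≠ 0).card ≤
            ((Finset.univ.filter fun i => c i ≠ 0).erase (Fin.last n)).card := by
          apply Finset.card_le_card_of_injOn Fin.castSucc
          · intro i hi
            simp only [Finset.mem_coe, Finset.mem_filter, Finset.mem_univ, true_and] at hi
            refine Finset.mem_erase.mpr ⟨Fin.castSucc_lt_last i |>.ne, ?_⟩
            simp only [Finset.mem_filter, Finset.mem_univ, true_and]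
            exact hi
          · exact fun a _ b _ hab => Fin.castSucc_injective n hab
        have h2 : Fin.last n ∈ Finset.univ.filter fun i => c i ≠ 0 := by
          simp only [Finset.mem_filter, Finset.mem_univ, true_and]; exact hlast
        rw [Finset.card_erase_of_mem h2] at h1
        omega
      set c'' : Fin n → ZMod p := fun i => (c (Fin.last n))⁻¹ * (- c' i) with hc''
      have hveq : v = ∑ i, c'' i • H i := by
        have h1 : c (Fin.last n) • v = ∑ i, (- c' i) • H i := by
          have := eq_neg_of_add_eq_zero_right hsum
          rw [this, ← Finset.sum_neg_distrib]
          apply Finset.sum_congr rfl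
          intro i _
          rw [neg_smul]
        calc v = (c (Fin.last n))⁻¹ • (c (Fin.last n) • v) := (inv_smul_smul₀ hlast v).symm
          _ = (c (Fin.last n))⁻¹ • ∑ i, (- c' i) • H i := by rw [h1]
          _ = ∑ i, c'' i • H i := by
              rw [Finset.smul_sum]
              apply Finset.sum_congr rfl
              intro i _
              rw [smul_smul]
      apply hv
      rw [hBad]
      apply Finset.mem_image.mpr
      refine ⟨c'', ?_, hveq.symm⟩
      simp only [Finset.mem_filter, Finset.mem_univ, true_and]
      refine le_trans (Finset.card_le_card ?_) hsupp'
      intro i hi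
      simp only [Finset.mem_filter, Finset.mem_univ, true_and, hc''] at hi ⊢
      intro h0
      apply hi
      rw [h0, neg_zero, mul_zero]


lemma exists_big_fiber {α β : Type*} [Fintype α] [Fintype β] [Nonempty β] [DecidableEq β]
    (f : α → β) :
    ∃ y : β, Fintype.card α ≤ Fintype.card β * (Finset.univ.filter fun x => f x = y).card := by
  have h : ∑ y : β, (Finset.univ.filter fun x => f x = y).card = Fintype.card α := by
    rw [← Finset.card_univ (α := α),
      Finset.card_eq_sum_card_fiberwise (fun x _ => Finset.mem_univ (f x))]
  obtain ⟨y, _, hy⟩ := Finset.exists_le_of_sum_le (Finset.univ_nonempty)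
    (f := fun _ : β => Fintype.card α)
    (g := fun y => Fintype.card β * (Finset.univ.filter fun x => f x = y).card) (by
      rw [Finset.sum_const, ← Finset.mul_sum, h, Finset.card_univ, smul_eq_mul])
  exact ⟨y, hy⟩

lemma exists_code_zmod (p n m s : ℕ) [Fact p.Prime]
    (H : Fin n → (Fin m → ZMod p))
    (hH : ∀ c : Fin n → ZMod p, c ≠ 0 →
      (Finset.univ.filter fun i => c i ≠ 0).card ≤ s + 1 → ∑ i, c i • H i ≠ 0) :
    ∃ C : Finset (Fin n → ZMod p),
      (∀ x ∈ C, ∀ y ∈ C, x ≠ y → s + 2 ≤ hammingDist x y) ∧ p^n ≤ p^m * C.card := by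
  obtain ⟨y, hy⟩ := exists_big_fiber (fun x : Fin n → ZMod p => ∑ i, x i • H i)
  refine ⟨Finset.univ.filter fun x => ∑ i, x i • H i = y, ?_, ?_⟩
  · intro a ha b hb hab
    by_contra hlt
    push_neg at hlt
    set c : Fin n → ZMod p := a - b with hcdef
    clear_value c
    have hc0 : c ≠ 0 := hcdef ▸ sub_ne_zero.mpr hab
    have hsupp : (Finset.univ.filter fun i => c i ≠ 0).card = hammingDist a b := by
      unfold hammingDist
      congr 1
      ext i
      simp [hcdef, sub_ne_zero]
    have hsum : ∑ i, c i • H i = 0 := by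
      have ha' := (Finset.mem_filter.mp ha).2
      have hb' := (Finset.mem_filter.mp hb).2
      simp only [hcdef, Pi.sub_apply, sub_smul, Finset.sum_sub_distrib, ha', hb', sub_self]
    exact hH c hc0 (hsupp ▸ Nat.lt_succ_iff.mp hlt) hsum
  · have h1 : Fintype.card (Fin n → ZMod p) = p^n := by simp [ZMod.card]
    have h2 : Fintype.card (Fin m → ZMod p) = p^m := by simp [ZMod.card]
    rw [← h1, ← h2]
    exact hy

lemma coord_card (t p : ℕ) (htp : t ≤ p) (hp : 0 < p) (b : ZMod p) :
    haveI : NeZero p := ⟨hp.ne'⟩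
    (Finset.univ.filter fun a : ZMod p => (b - a).val < t).card = t := by
  haveI : NeZero p := ⟨hp.ne'⟩
  have key : (Finset.univ.filter fun a : ZMod p => (b - a).val < t).card
      = (Finset.univ : Finset (Fin t)).card := by
    apply Finset.card_bij'
      (i := fun a ha => (⟨(b - a).val, (Finset.mem_filter.mp ha).2⟩ : Fin t))
      (j := fun j _ => b - ((j : ℕ) : ZMod p))
    case hi => exact fun a ha => Finset.mem_univ _
    case hj =>
      intro j _
      simp only [Finset.mem_filter, Finset.mem_univ, true_and, sub_sub_cancel]
      rw [ZMod.val_cast_of_lt (lt_of_lt_of_le j.isLt htp)]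
      exact j.isLt
    case left_inv =>
      intro a ha
      have hv : ((b - a).val : ZMod p) = b - a := ZMod.natCast_rightInverse (b - a)
      rw [hv, sub_sub_cancel]
    case right_inv =>
      intro j hj
      apply Fin.ext
      simp only [sub_sub_cancel]
      exact ZMod.val_cast_of_lt (lt_of_lt_of_le j.isLt htp)
  rw [key, Finset.card_univ, Fintype.card_fin]

lemma alphabet_change (t p n d : ℕ) (ht : 0 < t) (htp : t ≤ p) (hp : 0 < p)
    (C : Finset (Fin n → ZMod p))
    (hC : ∀ x ∈ C, ∀ y ∈ C, x ≠ y → d ≤ hammingDist x y) :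
    haveI : NeZero p := ⟨hp.ne'⟩
    ∃ u : Finset (Fin n → Fin t),
      (∀ x ∈ u, ∀ y ∈ u, x ≠ y → d ≤ hammingDist x y) ∧ C.card * t^n ≤ p^n * u.card := by
  haveI : NeZero p := ⟨hp.ne'⟩
  -- double counting over shifts g
  have hcount : ∑ g : Fin n → ZMod p,
      (C.filter fun x => ∀ i, (x i - g i).val < t).card = C.card * t^n := by
    have step1 : ∀ g : Fin n → ZMod p, (C.filter fun x => ∀ i, (x i - g i).val < t).card
        = ∑ x ∈ C, if (∀ i, (x i - g i).val < t) then 1 else 0 :=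
      fun g => Finset.card_filter _ _
    rw [Finset.sum_congr rfl fun g _ => step1 g, Finset.sum_comm]
    have step2 : ∀ x : Fin n → ZMod p,
        (∑ g : Fin n → ZMod p, if (∀ i, (x i - g i).val < t) then 1 else 0) = t^n := by
      intro x
      rw [← Finset.card_filter]
      have : (Finset.univ.filter fun g : Fin n → ZMod p => ∀ i, (x i - g i).val < t)
          = Fintype.piFinset (fun i => Finset.univ.filter fun a : ZMod p => (x i - a).val < t) := by
        ext g
        simp [Fintype.mem_piFinset]
      rw [this, Fintype.card_piFinset]
      rw [Finset.prod_congr rfl fun i _ => coord_card t p htp hp (x i)]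
      simp
    rw [Finset.sum_congr rfl fun x _ => step2 x, Finset.sum_const, smul_eq_mul]
  obtain ⟨g, _, hg⟩ := Finset.exists_le_of_sum_le (Finset.univ_nonempty)
    (f := fun _ : Fin n → ZMod p => C.card * t^n)
    (g := fun g => p^n * (C.filter fun x => ∀ i, (x i - g i).val < t).card) (by
      rw [Finset.sum_const, ← Finset.mul_sum, hcount, Finset.card_univ]
      simp [ZMod.card, mul_comm])
  set D := C.filter fun x => ∀ i, (x i - g i).val < t with hD
  clear_value D
  set F : (Fin n → ZMod p) → (Fin n → Fin t) :=
    fun x i => ⟨min ((x i - g i).val) (t-1),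
      Nat.lt_of_le_of_lt (Nat.min_le_right _ _) (Nat.sub_lt ht Nat.one_pos)⟩ with hF
  clear_value F
  have hFD : ∀ x ∈ D, ∀ i, (F x i : ℕ) = (x i - g i).val := by
    intro x hx i
    rw [hD] at hx
    have hvt := (Finset.mem_filter.mp hx).2 i
    simp only [hF]
    exact Nat.min_eq_left (Nat.le_sub_one_of_lt hvt)
  have hFinj : ∀ x ∈ D, ∀ y ∈ D, ∀ i, (F x i = F y i ↔ x i = y i) := by
    intro x hx y hy i
    constructor
    · intro h
      have h1 : (x i - g i).val = (y i - g i).val := by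
        rw [← hFD x hx i, ← hFD y hy i, h]
      have h2 : x i - g i = y i - g i := ZMod.val_injective p h1
      have := congrArg (· + g i) h2
      simpa [sub_add_cancel] using this
    · intro h
      simp [hF, h]
  refine ⟨D.image F, ?_, ?_⟩
  · intro x hx y hy hxy
    obtain ⟨a, ha, rfl⟩ := Finset.mem_image.mp hx
    obtain ⟨b, hb, rfl⟩ := Finset.mem_image.mp hy
    have hab : a ≠ b := fun h => hxy (by rw [h])
    rw [hD] at ha hb
    have hd := hC a (Finset.mem_filter.mp ha).1 b (Finset.mem_filter.mp hb).1 hab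
    rw [← hD] at ha hb
    have : hammingDist (F a) (F b) = hammingDist a b := by
      unfold hammingDist
      congr 1
      ext i
      simp only [Finset.mem_filter, Finset.mem_univ, true_and]
      exact not_congr (hFinj a ha b hb i) |>.symm |>.symm
    rw [this]
    exact hd
  · have : (D.image F).card = D.card := by
      apply Finset.card_image_of_injOn
      intro a ha b hb hab
      funext i
      exact (hFinj a ha b hb i).mp (congrFun hab i)
    rw [this]
    exact hg


lemma le_maxCode (t Q d : ℕ) (s : Finset (Fin Q → Fin t))
    (h : ∀ x ∈ s, ∀ y ∈ s, x ≠ y → d ≤ hammingDist x y) :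
    s.card ≤ maxCode t Q d := by
  apply le_csSup
  · refine ⟨Fintype.card (Fin Q → Fin t), ?_⟩
    rintro n ⟨u, _, rfl⟩
    exact u.card_le_univ.trans_eq Finset.card_univ
  · exact ⟨s, h, rfl⟩



/-- with `c_k = (k²+3k-2)/2` and `0 < c₉ < 1`, for `Q` large enough,
`A_t(Q - c_k, 2R+1) > c₉ (2R-1)!/(2^{2R}(t-1)^{2R-1}) · t^{Q-c_k-1}/Q^{2R-1}`. -/
theorem asymp_varshamov (t k R : ℕ) (ht : 2 ≤ t) (hR : R ≤ k) (c₉ : ℝ)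
    (hc0 : 0 < c₉) (hc1 : c₉ < 1) :
    ∃ Q₀ : ℕ, ∀ Q : ℕ, Q₀ ≤ Q →
      c₉ * (Nat.factorial (2 * R - 1) : ℝ)
          / (2 ^ (2 * R) * ((t : ℝ) - 1) ^ (2 * R - 1))
          * (t : ℝ) ^ (Q - (k ^ 2 + 3 * k - 2) / 2 - 1) / (Q : ℝ) ^ (2 * R - 1)
        < (maxCode t (Q - (k ^ 2 + 3 * k - 2) / 2) (2 * R + 1) : ℝ) := by
  set ck := (k ^ 2 + 3 * k - 2) / 2 with hck
  rcases Nat.eq_zero_or_pos R with hR0 | hRpos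
  · -- R = 0 : trivial, full code
    subst hR0
    refine ⟨ck + 1, fun Q hQ => ?_⟩
    set n := Q - ck with hn
    have hn1 : 1 ≤ n := by omega
    have hfull : (t:ℕ)^n ≤ maxCode t n 1 := by
      have := le_maxCode t n 1 Finset.univ (fun x _ y _ hxy => by
        have := hammingDist_pos.mpr hxy
        omega)
      simpa [Finset.card_univ] using this
    simp only [Nat.mul_zero, Nat.zero_sub, Nat.factorial_zero, pow_zero, Nat.cast_one,
      mul_one, one_mul, div_one, mul_zero]
    have hT : (0:ℝ) < (t:ℝ) := by positivity
    have hTn : (0:ℝ) < (t:ℝ)^(n-1) := by positivity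
    have hT2 : (2:ℝ) ≤ (t:ℝ) := by exact_mod_cast ht
    calc c₉ * (t:ℝ)^(n-1) < (t:ℝ)^(n-1) * (t:ℝ) := by nlinarith
      _ = (t:ℝ)^n := by rw [← pow_succ]; congr 1; omega
      _ ≤ maxCode t n 1 := by exact_mod_cast Nat.cast_le.mpr hfull
  · -- R ≥ 1
    set s := 2 * R - 1 with hs
    have hs1 : s + 1 = 2 * R := by omega
    have hs2 : s + 2 = 2 * R + 1 := by omega
    -- Bertrand prime
    obtain ⟨p, hp, htp, hp2t⟩ := Nat.exists_prime_lt_and_le_two_mul t (by omega)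
    haveI : Fact p.Prime := ⟨hp⟩
    have hpne2t : p ≤ 2 * t - 1 := by
      rcases Nat.lt_or_ge p (2*t) with h | h
      · omega
      · exfalso
        have hpeq : p = 2 * t := by omega
        have : ¬ p.Prime := by
          rw [hpeq]
          exact Nat.not_prime_mul (by omega) (by omega)
        exact this hp
    set A := s.factorial * s with hA
    obtain ⟨N₁, hN₁⟩ := exists_nat_gt (c₉ * A / (1 - c₉))
    refine ⟨N₁ + ck + s + 2, fun Q hQ => ?_⟩
    set n := Q - ck with hn
    have hn2 : 2 ≤ n := by omega
    have hQ1 : 1 ≤ Q := by omega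
    have hQbig : c₉ * A < (1 - c₉) * Q := by
      have h1 : (N₁ : ℝ) ≤ Q := by exact_mod_cast Nat.cast_le.mpr (by omega)
      have h2 : c₉ * A / (1 - c₉) < Q := lt_of_lt_of_le hN₁ h1
      have h3 : (0:ℝ) < 1 - c₉ := by linarith
      calc c₉ * A = (c₉ * A / (1 - c₉)) * (1 - c₉) := by field_simp
        _ < Q * (1 - c₉) := by exact mul_lt_mul_of_pos_right h2 h3
        _ = (1 - c₉) * Q := by ring
    -- the volume
    set V := ∑ i ∈ Finset.range (s+1), (n-1).choose i * (p-1)^i with hV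
    have hV1 : 1 ≤ V := by
      have h0 : (n-1).choose 0 * (p-1)^0 = 1 := by simp
      calc 1 = (n-1).choose 0 * (p-1)^0 := h0.symm
        _ ≤ V := Finset.single_le_sum (f := fun i => (n-1).choose i * (p-1)^i)
            (fun i _ => Nat.zero_le _) (Finset.mem_range.mpr (by omega))
    set m := Nat.log p V + 1 with hm
    have hplt : 1 < p := hp.one_lt
    have hVm : V < p^m := Nat.lt_pow_succ_log_self hplt V
    have hpmV : p^m ≤ p * V := by
      rw [hm, pow_succ, mul_comm (p ^ Nat.log p V) p]
      exact Nat.mul_le_mul_left p (Nat.pow_log_le_self p (by omega))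
    -- greedy + code + alphabet change
    obtain ⟨H, hH⟩ := greedy p m s (n-1) hVm n (by omega)
    obtain ⟨C, hCdist, hCcard⟩ := exists_code_zmod p n m s H hH
    obtain ⟨u, hudist, hucard⟩ := alphabet_change t p n (s+2) (by omega) (by omega) (by omega) C hCdist
    have humax : u.card ≤ maxCode t n (2*R+1) := by
      rw [← hs2]
      exact le_maxCode t n (s+2) u hudist
    -- t^n ≤ p^m * u.card
    have hkey : t^n ≤ p^m * u.card := by
      have h3 : p^n * t^n ≤ p^n * (p^m * u.card) := by
        calc p^n * t^n ≤ (p^m * C.card) * t^n := Nat.mul_le_mul_right _ hCcard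
          _ = p^m * (C.card * t^n) := by ring
          _ ≤ p^m * (p^n * u.card) := Nat.mul_le_mul_left _ hucard
          _ = p^n * (p^m * u.card) := by ring
      exact Nat.le_of_mul_le_mul_left h3 (by positivity)
    -- ℕ volume estimate
    have hVbound : s.factorial * V ≤ (Q^s + A * Q^(s-1)) * (p-1)^s := by
      have htop : s.factorial * ((n-1).choose s * (p-1)^s) ≤ Q^s * (p-1)^s := by
        have h1 : s.factorial * (n-1).choose s ≤ (n-1)^s := by
          rw [← Nat.descFactorial_eq_factorial_mul_choose]
          exact Nat.descFactorial_le_pow _ _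
        calc s.factorial * ((n-1).choose s * (p-1)^s)
            = (s.factorial * (n-1).choose s) * (p-1)^s := by ring
          _ ≤ (n-1)^s * (p-1)^s := Nat.mul_le_mul_right _ h1
          _ ≤ Q^s * (p-1)^s := Nat.mul_le_mul_right _ (Nat.pow_le_pow_left (by omega) s)
      have hlow : ∑ i ∈ Finset.range s, (n-1).choose i * (p-1)^i ≤ s * (Q^(s-1) * (p-1)^s) := by
        calc ∑ i ∈ Finset.range s, (n-1).choose i * (p-1)^i
            ≤ ∑ _i ∈ Finset.range s, Q^(s-1) * (p-1)^s := by
              apply Finset.sum_le_sum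
              intro i hi
              rw [Finset.mem_range] at hi
              calc (n-1).choose i * (p-1)^i ≤ (n-1)^i * (p-1)^i :=
                    Nat.mul_le_mul_right _ (Nat.choose_le_pow _ _)
                _ ≤ Q^(s-1) * (p-1)^s := by
                    apply Nat.mul_le_mul
                    · calc (n-1)^i ≤ Q^i := Nat.pow_le_pow_left (by omega) i
                        _ ≤ Q^(s-1) := Nat.pow_le_pow_right (by omega) (by omega)
                    · exact Nat.pow_le_pow_right (by omega) (by omega)
          _ = s * (Q^(s-1) * (p-1)^s) := by rw [Finset.sum_const, Finset.card_range, smul_eq_mul]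
      calc s.factorial * V
          = s.factorial * (∑ i ∈ Finset.range s, (n-1).choose i * (p-1)^i)
            + s.factorial * ((n-1).choose s * (p-1)^s) := by
            rw [hV, Finset.sum_range_succ, Nat.mul_add]
        _ ≤ s.factorial * (s * (Q^(s-1) * (p-1)^s)) + Q^s * (p-1)^s := by
            exact Nat.add_le_add (Nat.mul_le_mul_left _ hlow) htop
        _ = (Q^s + A * Q^(s-1)) * (p-1)^s := by rw [hA]; ring
    -- ℕ: s! * (p*V) ≤ 2t * ((Q^s + A Q^(s-1)) * (2(t-1))^s)
    have hW : s.factorial * (p * V) ≤ (2*t) * ((Q^s + A * Q^(s-1)) * (2*(t-1))^s) := by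
      calc s.factorial * (p * V) = p * (s.factorial * V) := by ring
        _ ≤ (2*t) * ((Q^s + A * Q^(s-1)) * (p-1)^s) := Nat.mul_le_mul (by omega) hVbound
        _ ≤ (2*t) * ((Q^s + A * Q^(s-1)) * (2*(t-1))^s) := by
            apply Nat.mul_le_mul_left
            apply Nat.mul_le_mul_left
            exact Nat.pow_le_pow_left (by omega) s
    -- move to ℝ
    have hQpos : (0:ℝ) < Q := by exact_mod_cast hQ1
    have hTpos : (0:ℝ) < (t:ℝ) := by positivity
    have hT1 : (1:ℝ) ≤ (t:ℝ) - 1 := by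
      have : (2:ℝ) ≤ (t:ℝ) := by exact_mod_cast ht
      linarith
    have hppos : (0:ℝ) < (p:ℝ) := by
      have : 0 < p := hp.pos
      exact_mod_cast this
    have hVpos : (0:ℝ) < (V:ℝ) := by exact_mod_cast hV1
    have hc : c₉ * ((Q:ℝ)^s + (A:ℝ)*(Q:ℝ)^(s-1)) < (Q:ℝ)^s := by
      have hQs : (Q:ℝ)^s = (Q:ℝ)^(s-1) * Q := by
        rw [← pow_succ]
        congr 1
        omega
      have h4 := mul_lt_mul_of_pos_right hQbig (pow_pos hQpos (s-1))
      rw [hQs]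
      nlinarith [pow_pos hQpos (s-1)]
    have hkey0 : c₉ * ((s.factorial : ℝ) * ((p:ℝ) * (V:ℝ)))
        < (t:ℝ) * (Q:ℝ)^s * (2^(s+1) * ((t:ℝ)-1)^s) := by
      have hWr : ((s.factorial : ℝ) * ((p:ℝ) * (V:ℝ)))
          ≤ (2*(t:ℝ)) * (((Q:ℝ)^s + (A:ℝ)*(Q:ℝ)^(s-1)) * (2*((t:ℝ)-1))^s) := by
        have := hW
        have hcast : ((s.factorial * (p * V) : ℕ) : ℝ)
            ≤ (((2*t) * ((Q^s + A * Q^(s-1)) * (2*(t-1))^s) : ℕ) : ℝ) := by exact_mod_cast this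
        push_cast [Nat.cast_sub (by omega : 1 ≤ t)] at hcast
        convert hcast using 2 <;> push_cast <;> ring
      have hPpos : (0:ℝ) < 2*(t:ℝ) * 2^s * ((t:ℝ)-1)^s := by positivity
      calc c₉ * ((s.factorial : ℝ) * ((p:ℝ) * (V:ℝ)))
          ≤ c₉ * ((2*(t:ℝ)) * (((Q:ℝ)^s + (A:ℝ)*(Q:ℝ)^(s-1)) * (2*((t:ℝ)-1))^s)) := by
            exact mul_le_mul_of_nonneg_left hWr hc0.le
        _ = (2*(t:ℝ) * 2^s * ((t:ℝ)-1)^s) * (c₉ * ((Q:ℝ)^s + (A:ℝ)*(Q:ℝ)^(s-1))) := by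
            rw [mul_pow]; ring
        _ < (2*(t:ℝ) * 2^s * ((t:ℝ)-1)^s) * (Q:ℝ)^s := by
            exact mul_lt_mul_of_pos_left hc hPpos
        _ = (t:ℝ) * (Q:ℝ)^s * (2^(s+1) * ((t:ℝ)-1)^s) := by
            rw [pow_succ]; ring
    -- final comparison
    have hu : ((t:ℝ))^n / ((p:ℝ))^m ≤ (u.card : ℝ) := by
      rw [div_le_iff₀ (by positivity)]
      calc ((t:ℝ))^n ≤ ((p^m * u.card : ℕ) : ℝ) := by exact_mod_cast hkey
        _ = (u.card : ℝ) * ((p:ℝ))^m := by push_cast; ring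
    have humax' : (u.card : ℝ) ≤ (maxCode t n (2*R+1) : ℝ) := by exact_mod_cast humax
    have hpmV' : ((p:ℝ))^m ≤ (p:ℝ) * (V:ℝ) := by exact_mod_cast hpmV
    have step : c₉ * (s.factorial : ℝ) / (2 ^ (2*R) * ((t:ℝ) - 1) ^ s) * (t:ℝ)^(n-1) / (Q:ℝ)^s
        < ((t:ℝ))^n / ((p:ℝ))^m := by
      rw [← hs1]
      have hfrac : c₉ * (s.factorial : ℝ) / (2 ^ (s+1) * ((t:ℝ) - 1) ^ s) * (t:ℝ)^(n-1) / (Q:ℝ)^s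
          = (c₉ * (s.factorial : ℝ) * (t:ℝ)^(n-1)) / ((2 ^ (s+1) * ((t:ℝ) - 1) ^ s) * (Q:ℝ)^s) := by
        field_simp
      rw [hfrac, div_lt_div_iff₀ (by positivity) (by positivity)]
      calc c₉ * (s.factorial : ℝ) * (t:ℝ)^(n-1) * ((p:ℝ))^m
          ≤ c₉ * (s.factorial : ℝ) * (t:ℝ)^(n-1) * ((p:ℝ) * (V:ℝ)) := by
            apply mul_le_mul_of_nonneg_left hpmV'
            positivity
        _ = (c₉ * ((s.factorial : ℝ) * ((p:ℝ) * (V:ℝ)))) * (t:ℝ)^(n-1) := by ring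
        _ < ((t:ℝ) * (Q:ℝ)^s * (2^(s+1) * ((t:ℝ)-1)^s)) * (t:ℝ)^(n-1) := by
            exact mul_lt_mul_of_pos_right hkey0 (by positivity)
        _ = ((t:ℝ)^(n-1) * (t:ℝ)) * ((2 ^ (s+1) * ((t:ℝ) - 1) ^ s) * (Q:ℝ)^s) := by ring
        _ = (t:ℝ)^n * ((2 ^ (s+1) * ((t:ℝ) - 1) ^ s) * (Q:ℝ)^s) := by
            rw [← pow_succ]
            congr 2
            omega
    calc c₉ * (s.factorial : ℝ) / (2 ^ (2*R) * ((t:ℝ) - 1) ^ s) * (t:ℝ)^(n-1) / (Q:ℝ)^s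
        < ((t:ℝ))^n / ((p:ℝ))^m := step
      _ ≤ (u.card : ℝ) := hu
      _ ≤ (maxCode t n (2*R+1) : ℝ) := humax'
end

section
/- Let w ∈ T^Q be a string in which every letter of T occurs at most F times, and let u be a lie string of length j. Then the number of strings w' with w →^u w' is at most C(M+j-1, j)·F^j when w is divided into M contiguous sections and each letter occurs at most F times per section. More precisely: if each letter of T occurs at most F times in each of the M sections of w, then |{w' : w →^u w'}| ≤ C(M+j-1,j) · F^j. -/
/-- `Applies u w w'` : the lie string `u = (a₁,b₁)⋯(a_j,b_j)` can be applied to `w`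
to obtain `w'`; that is, there are positions `i₁ < ⋯ < i_j` with `w` carrying letter
`a_ℓ` and `w'` carrying letter `b_ℓ` at position `i_ℓ`, and `w`, `w'` agree elsewhere. -/
def Applies {t Q : ℕ} (u : List (Fin t × Fin t)) (w w' : Fin Q → Fin t) : Prop :=
  ∃ pos : Fin u.length → Fin Q, StrictMono pos ∧
    (∀ ℓ : Fin u.length, w (pos ℓ) = (u.get ℓ).1 ∧ w' (pos ℓ) = (u.get ℓ).2) ∧
    (∀ p : Fin Q, (∀ ℓ, pos ℓ ≠ p) → w p = w' p)

lemma sectionOf_mono (Q M : ℕ) : Monotone (sectionOf Q M) := by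
  intro p q hpq
  unfold sectionOf
  by_cases hp : p < (Q % M) * (Q / M + 1)
  · by_cases hq : q < (Q % M) * (Q / M + 1)
    · simp only [hp, hq, if_true]
      exact Nat.div_le_div_right hpq
    · simp only [hp, hq, if_true, if_false]
      have h1 : p / (Q / M + 1) < Q % M := Nat.div_lt_of_lt_mul (by rwa [Nat.mul_comm] at hp)
      exact le_trans h1.le (Nat.le_add_right _ _)
  · have hq : ¬ q < (Q % M) * (Q / M + 1) := fun h => hp (lt_of_le_of_lt hpq h)
    simp only [hp, hq, if_false]
    exact Nat.add_le_add_left (Nat.div_le_div_right (Nat.sub_le_sub_right hpq _)) _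

lemma sectionOf_lt {Q M p : ℕ} (hM : 0 < M) (hp : p < Q) : sectionOf Q M p < M := by
  unfold sectionOf
  have hQ : M * (Q / M) + Q % M = Q := Nat.div_add_mod Q M
  have hcM : Q % M < M := Nat.mod_lt _ hM
  by_cases h : p < (Q % M) * (Q / M + 1)
  · simp only [h, if_true]
    exact lt_trans (Nat.div_lt_of_lt_mul (by rwa [Nat.mul_comm] at h)) hcM
  · simp only [h, if_false]
    push_neg at h
    have hd : 0 < Q / M := by
      rcases Nat.eq_zero_or_pos (Q / M) with h0 | h0
      · exfalso
        rw [h0] at hQ h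
        simp only [Nat.mul_zero, Nat.zero_add] at hQ
        simp only [Nat.zero_add, Nat.mul_one] at h
        omega
      · exact h0
    have hlt : (p - (Q % M) * (Q / M + 1)) / (Q / M) < M - Q % M := by
      apply Nat.div_lt_of_lt_mul
      rw [tsub_lt_iff_left h]
      have h1 : (M - Q % M) * (Q / M) + (Q % M) * (Q / M) = M * (Q / M) := by
        rw [← Nat.add_mul, Nat.sub_add_cancel hcM.le]
      have h2 : (Q % M) * (Q / M + 1) = (Q % M) * (Q / M) + Q % M := Nat.mul_succ _ _
      have h3 : (Q / M) * (M - Q % M) = (M - Q % M) * (Q / M) := Nat.mul_comm _ _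
      omega
    omega

lemma rank_inj {Q : ℕ} (A : Set (Fin Q)) {x y : Fin Q} (hx : x ∈ A) (hy : y ∈ A)
    (h : {q ∈ A | q < x}.ncard = {q ∈ A | q < y}.ncard) : x = y := by
  by_contra hne
  wlog hxy : x < y generalizing x y
  · exact this hy hx h.symm (Ne.symm hne) (lt_of_le_of_ne (not_lt.mp hxy) (Ne.symm hne))
  have hss : {q ∈ A | q < x} ⊂ {q ∈ A | q < y} := by
    constructor
    · rintro q ⟨hqA, hq⟩; exact ⟨hqA, hq.trans hxy⟩
    · intro hsub
      exact absurd (hsub ⟨hx, hxy⟩).2 (lt_irrefl x)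
  exact absurd h (Set.ncard_lt_ncard hss (Set.toFinite _)).ne


/-- if each letter occurs at most `F` times in each of the `M` sections
of `w`, and `u` is a lie string of length `j`, then
`|{w' : w →ᵘ w'}| ≤ C(M+j-1,j)·F^j`. -/
theorem shadow_upper_sections (t Q M F j : ℕ) (ht : 2 ≤ t) (hM : 0 < M)
    (w : Fin Q → Fin t)
    (hw : ∀ m < M, ∀ a : Fin t,
      Set.ncard {p : Fin Q | sectionOf Q M p = m ∧ w p = a} ≤ F)
    (u : List (Fin t × Fin t)) (hlie : ∀ p ∈ u, p.1 ≠ p.2) (hj : u.length = j) :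
    Set.ncard {w' : Fin Q → Fin t | Applies u w w'}
      ≤ Nat.choose (M + j - 1) j * F ^ j := by
  classical
  subst hj
  set n := u.length with hn
  set S := {w' : Fin Q → Fin t | Applies u w w'} with hSdef
  let pos : ↥S → Fin n → Fin Q := fun x => Exists.choose (x.2 : Applies u w x.1)
  have hpos : ∀ x : ↥S, StrictMono (pos x) ∧
      (∀ ℓ, w (pos x ℓ) = (u.get ℓ).1 ∧ x.1 (pos x ℓ) = (u.get ℓ).2) ∧
      (∀ p, (∀ ℓ, pos x ℓ ≠ p) → w p = x.1 p) :=
    fun x => Exists.choose_spec (x.2 : Applies u w x.1)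
  have hsec : ∀ (x : ↥S) (ℓ : Fin n), sectionOf Q M (pos x ℓ) < M :=
    fun x ℓ => sectionOf_lt hM (pos x ℓ).isLt
  let e : ↥S → Fin n → Fin (M + n - 1) := fun x ℓ =>
    ⟨sectionOf Q M (pos x ℓ) + ℓ, by have := hsec x ℓ; have := ℓ.isLt; omega⟩
  have he_val : ∀ (x : ↥S) (ℓ : Fin n), (e x ℓ : ℕ) = sectionOf Q M (pos x ℓ) + ℓ :=
    fun x ℓ => rfl
  have he_mono : ∀ x : ↥S, StrictMono (e x) := by
    intro x ℓ ℓ' hll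
    have h1 : pos x ℓ < pos x ℓ' := (hpos x).1 hll
    have h2 : sectionOf Q M (pos x ℓ) ≤ sectionOf Q M (pos x ℓ') := sectionOf_mono Q M h1.le
    have h3 : (ℓ : ℕ) < ℓ' := hll
    rw [Fin.lt_def, he_val, he_val]
    omega
  have hcard : ∀ x : ↥S, (Finset.image (e x) Finset.univ).card = n := by
    intro x
    rw [Finset.card_image_of_injective _ (he_mono x).injective, Finset.card_univ,
      Fintype.card_fin]
  -- the rank of `pos x ℓ` within its section/letter class
  have hrank : ∀ (x : ↥S) (ℓ : Fin n),
      ({q ∈ {p : Fin Q | sectionOf Q M p = sectionOf Q M (pos x ℓ) ∧ w p = (u.get ℓ).1} |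
        q < pos x ℓ}).ncard < F := by
    intro x ℓ
    set A : Set (Fin Q) :=
      {p : Fin Q | sectionOf Q M p = sectionOf Q M (pos x ℓ) ∧ w p = (u.get ℓ).1} with hA
    have hmem : pos x ℓ ∈ A := ⟨rfl, ((hpos x).2.1 ℓ).1⟩
    have hss : {q ∈ A | q < pos x ℓ} ⊂ A := by
      constructor
      · rintro q ⟨hqA, _⟩; exact hqA
      · intro hsub
        exact absurd (hsub hmem).2 (lt_irrefl _)
    exact lt_of_lt_of_le (Set.ncard_lt_ncard hss (Set.toFinite _))
      (hw _ (hsec x ℓ) ((u.get ℓ).1))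
  let r : ↥S → Fin n → Fin F := fun x ℓ =>
    ⟨({q ∈ {p : Fin Q | sectionOf Q M p = sectionOf Q M (pos x ℓ) ∧ w p = (u.get ℓ).1} |
        q < pos x ℓ}).ncard, hrank x ℓ⟩
  let T : Finset (Finset (Fin (M + n - 1))) :=
    Finset.powersetCard n (Finset.univ : Finset (Fin (M + n - 1)))
  let Φ : ↥S → ↥T × (Fin n → Fin F) := fun x =>
    (⟨Finset.image (e x) Finset.univ,
      Finset.mem_powersetCard.mpr ⟨Finset.subset_univ _, hcard x⟩⟩, r x)
  have hΦ : Function.Injective Φ := by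
    intro x y hxy
    have himg : Finset.image (e x) Finset.univ = Finset.image (e y) Finset.univ :=
      congrArg Subtype.val (congrArg Prod.fst hxy)
    have hr : r x = r y := congrArg Prod.snd hxy
    have hee : e x = e y := by
      have hx' := Finset.orderEmbOfFin_unique (hcard x)
        (fun i => Finset.mem_image_of_mem _ (Finset.mem_univ i)) (he_mono x)
      have hy' := Finset.orderEmbOfFin_unique (s := Finset.image (e x) Finset.univ) (hcard x)
        (fun i => himg ▸ Finset.mem_image_of_mem (e y) (Finset.mem_univ i)) (he_mono y)
      exact hx'.trans hy'.symm
    have hsec_eq : ∀ ℓ, sectionOf Q M (pos x ℓ) = sectionOf Q M (pos y ℓ) := by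
      intro ℓ
      have h1 := congrArg Fin.val (congrFun hee ℓ)
      rw [he_val, he_val] at h1
      omega
    have hpos_eq : ∀ ℓ, pos x ℓ = pos y ℓ := by
      intro ℓ
      have hrv : ({q ∈ {p : Fin Q | sectionOf Q M p = sectionOf Q M (pos x ℓ) ∧
              w p = (u.get ℓ).1} | q < pos x ℓ}).ncard =
          ({q ∈ {p : Fin Q | sectionOf Q M p = sectionOf Q M (pos y ℓ) ∧
              w p = (u.get ℓ).1} | q < pos y ℓ}).ncard :=
        congrArg Fin.val (congrFun hr ℓ)
      rw [hsec_eq ℓ] at hrv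
      exact rank_inj {p : Fin Q | sectionOf Q M p = sectionOf Q M (pos y ℓ) ∧
          w p = (u.get ℓ).1}
        ⟨hsec_eq ℓ, ((hpos x).2.1 ℓ).1⟩ ⟨rfl, ((hpos y).2.1 ℓ).1⟩ hrv
    apply Subtype.ext
    funext p
    by_cases hcase : ∃ ℓ, pos x ℓ = p
    · obtain ⟨ℓ, hℓ⟩ := hcase
      have h1 : x.1 p = (u.get ℓ).2 := hℓ ▸ ((hpos x).2.1 ℓ).2
      have h2 : y.1 p = (u.get ℓ).2 := by
        have := ((hpos y).2.1 ℓ).2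
        rwa [← hpos_eq ℓ, hℓ] at this
      rw [h1, h2]
    · push_neg at hcase
      have h1 := (hpos x).2.2 p hcase
      have h2 := (hpos y).2.2 p (fun ℓ => (hpos_eq ℓ) ▸ hcase ℓ)
      rw [← h1, ← h2]
  calc Set.ncard S = Nat.card ↥S := (Nat.card_coe_set_eq S).symm
    _ ≤ Nat.card (↥T × (Fin n → Fin F)) := Nat.card_le_card_of_injective Φ hΦ
    _ = Nat.choose (M + n - 1) n * F ^ n := by
        simp [T, Nat.card_eq_fintype_card, Finset.card_powersetCard, Fintype.card_fun]
end
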